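/- Let G' = (V',E') be a finite simple graph, r a positive integer, G = G(G',r) the gadget graph, X = A₁ ∪ A₂ ∪ B, and γ_r = (r²+r−1)/(2r²+2r−1). If M ⊆ V' is nonempty with |M| < r, then X ∪ M is not a γ_r-quasi-clique in G (some vertex of M has degree at most r²+|M|−1 in G[X ∪ M], which is strictly below the required threshold ⌈γ_r·(2r²+r+|M|−1)⌉). -/

import Mathlib

open SimpleGraph Set

/-- Vertex type of the gadget graph: the original vertices `V`, plus
`A₁` and `A₂` (each of size `r²`) and `B` (of size `r`). -/
abbrev GadgetV (V : Type*) (r : ℕ) : Type _ := V ⊕ (Fin (r ^ 2) ⊕ Fin (r ^ 2) ⊕ Fin r)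

/-- Membership in `A₁`. -/
def isA1 {V : Type*} {r : ℕ} : GadgetV V r → Prop
  | Sum.inr (Sum.inl _) => True
  | _ => False

/-- Membership in `A₂`. -/
def isA2 {V : Type*} {r : ℕ} : GadgetV V r → Prop
  | Sum.inr (Sum.inr (Sum.inl _)) => True
  | _ => False

/-- Membership in `B`. -/
def isB {V : Type*} {r : ℕ} : GadgetV V r → Prop
  | Sum.inr (Sum.inr (Sum.inr _)) => True
  | _ => False

/-- The gadget graph `G(G',r)`: all edges of `G'`, `A₁`, `A₂`, `B` are cliques,
all pairs between `A₁` and `A₂`, between `A₁` and `B`, and between `A₁` and `V'`.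
(A vertex of `A₁` is adjacent to every other vertex.) -/
def gadget {V : Type*} (G' : SimpleGraph V) (r : ℕ) : SimpleGraph (GadgetV V r) :=
  SimpleGraph.fromRel fun a b =>
    isA1 a ∨ (∃ u v, a = Sum.inl u ∧ b = Sum.inl v ∧ G'.Adj u v) ∨
      (isA2 a ∧ isA2 b) ∨ (isB a ∧ isB b)

/-- The set `X = A₁ ∪ A₂ ∪ B`. -/
def Xset (V : Type*) (r : ℕ) : Set (GadgetV V r) := {x | isA1 x ∨ isA2 x ∨ isB x}

/-- Degree of a vertex `v` in the subgraph of `G` induced on `Q`: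
the number of neighbors of `v` lying in `Q`. -/
noncomputable def degIn {W : Type*} (G : SimpleGraph W) (Q : Set W) (v : W) : ℕ :=
  (Q ∩ G.neighborSet v).ncard

/-- `Q` is a `γ`-quasi-clique in `G`: the induced subgraph `G[Q]` is connected and
every vertex of `Q` has degree at least `⌈γ·(|Q|-1)⌉` in `G[Q]`. -/
def IsQuasiClique {W : Type*} (G : SimpleGraph W) (γ : ℚ) (Q : Set W) : Prop :=
  (G.induce Q).Connected ∧ ∀ v ∈ Q, ⌈γ * ((Q.ncard : ℚ) - 1)⌉ ≤ (degIn G Q v : ℤ)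

/-- `γ_r = (r²+r−1)/(2r²+2r−1)`. -/
def gammaR (r : ℕ) : ℚ := ((r : ℚ) ^ 2 + r - 1) / (2 * (r : ℚ) ^ 2 + 2 * r - 1)

lemma notA_inl {V : Type*} {r : ℕ} (u : V) :
    ¬ (isA1 (Sum.inl u : GadgetV V r) ∨ isA2 (Sum.inl u : GadgetV V r) ∨
      isB (Sum.inl u : GadgetV V r)) := by
  rintro (h | h | h) <;> exact h

lemma isA1_iff {V : Type*} {r : ℕ} (x : GadgetV V r) :
    isA1 x ↔ ∃ i : Fin (r ^ 2), x = Sum.inr (Sum.inl i) := by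
  rcases x with u | i | i | i <;> simp [isA1]

/-- If `M ⊆ V'` is nonempty with `|M| < r`, then `X ∪ M` is not a
`γ_r`-quasi-clique in the gadget graph. -/
theorem stmt_11 {V : Type*} [Fintype V] (G' : SimpleGraph V) (r : ℕ) (hr : 0 < r)
    (M : Set V) (hne : M.Nonempty) (hM : M.ncard < r) :
    ¬ IsQuasiClique (gadget G' r) (gammaR r) (Xset V r ∪ Sum.inl '' M) := by
  rintro ⟨-, hdeg⟩
  obtain ⟨v, hv⟩ := hne
  set Q : Set (GadgetV V r) := Xset V r ∪ Sum.inl '' M with hQ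
  have hvQ : Sum.inl v ∈ Q := Or.inr ⟨v, hv, rfl⟩
  have h2 := hdeg _ hvQ
  have hMfin : M.Finite := Set.toFinite M
  have hm1 : 1 ≤ M.ncard := (Set.ncard_pos hMfin).mpr ⟨v, hv⟩
  -- X = range inr
  have hX : Xset V r = Set.range (Sum.inr : _ → GadgetV V r) := by
    ext x
    constructor
    · intro h
      match x, h with
      | Sum.inr y, _ => exact ⟨y, rfl⟩
      | Sum.inl u, h => exact (notA_inl u h).elim
    · rintro ⟨y, rfl⟩
      rcases y with a | a | a
      · exact Or.inl trivial
      · exact Or.inr (Or.inl trivial)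
      · exact Or.inr (Or.inr trivial)
  have hXcard : (Xset V r).ncard = 2 * r ^ 2 + r := by
    rw [hX, ← Set.image_univ, Set.ncard_image_of_injective _ Sum.inr_injective,
      Set.ncard_univ]
    simp [Nat.card_eq_fintype_card]
    ring
  have hdisj : Disjoint (Xset V r) (Sum.inl '' M) := by
    rw [hX, Set.disjoint_left]
    rintro a ⟨y, rfl⟩ ⟨u, -, h⟩
    exact Sum.inl_ne_inr h
  have hQcard : Q.ncard = 2 * r ^ 2 + r + M.ncard := by
    rw [hQ, Set.ncard_union_eq hdisj (Set.toFinite _) (Set.toFinite _), hXcard,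
      Set.ncard_image_of_injective _ Sum.inl_injective]
  -- neighbors of `inl v` inside Q are in A₁ or in M \ {v}
  have hsub : Q ∩ (gadget G' r).neighborSet (Sum.inl v) ⊆
      (Set.range fun i : Fin (r ^ 2) => (Sum.inr (Sum.inl i) : GadgetV V r)) ∪
        Sum.inl '' (M \ {v}) := by
    rintro b ⟨hbQ, hbN⟩
    rw [SimpleGraph.mem_neighborSet, gadget, SimpleGraph.fromRel_adj] at hbN
    obtain ⟨hb_ne, hrel⟩ := hbN
    have hMem : ∀ w : V, Sum.inl w ∈ Q → w ∈ M := by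
      intro w hw
      rcases hw with hw | ⟨u, hu, huw⟩
      · exact (notA_inl w hw).elim
      · cases huw; exact hu
    rcases hrel with (h | ⟨u, w, hu, hw, hadj⟩ | ⟨h, -⟩ | ⟨h, -⟩) |
        (h | ⟨u, w, hu, hw, hadj⟩ | ⟨-, h⟩ | ⟨-, h⟩)
    · exact (h : False).elim
    · cases hu
      subst hw
      refine Or.inr ⟨w, ⟨hMem w hbQ, ?_⟩, rfl⟩
      intro hwv; subst hwv; exact G'.irrefl hadj
    · exact (h : False).elim
    · exact (h : False).elim
    · obtain ⟨i, rfl⟩ := (isA1_iff b).mp h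
      exact Or.inl ⟨i, rfl⟩
    · subst hu
      cases hw
      refine Or.inr ⟨u, ⟨hMem u hbQ, ?_⟩, rfl⟩
      intro huv; subst huv; exact G'.irrefl hadj
    · exact (h : False).elim
    · exact (h : False).elim
  -- degree upper bound
  have hdb : degIn (gadget G' r) Q (Sum.inl v) ≤ r ^ 2 + (M.ncard - 1) := by
    refine (Set.ncard_le_ncard hsub (Set.toFinite _)).trans ?_
    refine (Set.ncard_union_le _ _).trans ?_
    have h1 : (Set.range fun i : Fin (r ^ 2) => (Sum.inr (Sum.inl i) : GadgetV V r)).ncard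
        = r ^ 2 := by
      rw [← Set.image_univ, Set.ncard_image_of_injective, Set.ncard_univ]
      · simp
      · intro a b hab
        simpa using hab
    have h3 : (Sum.inl '' (M \ {v}) : Set (GadgetV V r)).ncard = M.ncard - 1 := by
      rw [Set.ncard_image_of_injective _ Sum.inl_injective,
        Set.ncard_diff_singleton_of_mem hv]
    rw [h1, h3]
  -- ceiling lower bound
  have hb : (0 : ℚ) < 2 * (r : ℚ) ^ 2 + 2 * r - 1 := by
    have : (1 : ℚ) ≤ r := by exact_mod_cast hr
    nlinarith
  have hkey : ((r ^ 2 + (M.ncard - 1) : ℕ) : ℤ) < ⌈gammaR r * ((Q.ncard : ℚ) - 1)⌉ := by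
    rw [Int.lt_ceil, hQcard]
    have hcast : ((r ^ 2 + (M.ncard - 1) : ℕ) : ℚ) = (r : ℚ) ^ 2 + M.ncard - 1 := by
      push_cast [Nat.cast_sub hm1]
      ring
    rw [Int.cast_natCast, hcast, gammaR, div_mul_eq_mul_div, lt_div_iff₀ hb]
    have hm' : (1 : ℚ) ≤ (M.ncard : ℚ) := by exact_mod_cast hm1
    have hmr : ((M.ncard : ℚ)) + 1 ≤ (r : ℚ) := by exact_mod_cast hM
    have hr' : (1 : ℚ) ≤ (r : ℚ) := by exact_mod_cast hr
    push_cast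
    nlinarith [mul_nonneg (by nlinarith : (0 : ℚ) ≤ (r : ℚ) ^ 2 + r)
      (by nlinarith : (0 : ℚ) ≤ (r : ℚ) - M.ncard - 1), sq_nonneg ((r : ℚ) - 1)]
  have hdb' : (degIn (gadget G' r) Q (Sum.inl v) : ℤ) ≤ ((r ^ 2 + (M.ncard - 1) : ℕ) : ℤ) := by
    exact_mod_cast hdb
  exact absurd (h2.trans hdb') hkey.not_ge
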